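/- Let (X,x) be a pointed topological space and let [f] ∈ π₁^top(X,x). Then right translation R_[f] : π₁^top(X,x) → π₁^top(X,x), [g] ↦ [g]·[f], is a homeomorphism of π₁^top(X,x). -/

import Mathlib

attribute [local instance] Path.Homotopic.setoid

/-- The topological fundamental group: homotopy classes of loops at `x` with the
quotient topology induced from the compact-open topology on the loop space. -/
instance piTopTopology {X : Type*} [TopologicalSpace X] (x y : X) :
    TopologicalSpace (Path.Homotopic.Quotient x y) :=
  inferInstanceAs (TopologicalSpace (Quotient (Path.Homotopic.setoid x y)))

private lemma continuous_comp_right {X : Type*} [TopologicalSpace X] (x : X) (q0 : Path x x) :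
    Continuous (fun g : Path.Homotopic.Quotient x x => g.trans ⟦q0⟧) := by
  have H : Relator.LiftFun Setoid.r Setoid.r (fun p : Path x x => p.trans q0)
      (fun p : Path x x => p.trans q0) := fun a b h => Path.Homotopic.hcomp h (Path.Homotopic.refl q0)
  have key : (fun g : Path.Homotopic.Quotient x x => g.trans ⟦q0⟧)
      = Quotient.map' (fun p : Path x x => p.trans q0) H := by
    funext g
    induction g using Quotient.ind
    rfl
  rw [key]
  exact Continuous.quotient_map' (continuous_id.path_trans continuous_const) H

theorem right_translation_isHomeomorph
    {X : Type*} [TopologicalSpace X] (x : X) (f : Path.Homotopic.Quotient x x) :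
    IsHomeomorph (fun g : Path.Homotopic.Quotient x x => g.trans f) := by
  obtain ⟨f0, rfl⟩ := Quotient.exists_rep f
  have assoc : ∀ a b c : Path.Homotopic.Quotient x x, (a.trans b).trans c = a.trans (b.trans c) := by
    intro a b c
    induction a using Quotient.ind
    induction b using Quotient.ind
    induction c using Quotient.ind
    exact Quotient.sound ⟨(Path.Homotopy.transAssoc _ _ _)⟩
  have comp_refl : ∀ a : Path.Homotopic.Quotient x x, a.trans ⟦Path.refl x⟧ = a := by
    intro a
    induction a using Quotient.ind
    exact Quotient.sound ⟨Path.Homotopy.transRefl _⟩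
  have h1 : Path.Homotopic.Quotient.trans (⟦f0⟧ : Path.Homotopic.Quotient x x) (⟦f0.symm⟧ : Path.Homotopic.Quotient x x) = ⟦Path.refl x⟧ :=
    Quotient.sound ⟨(Path.Homotopy.reflTransSymm f0).symm⟩
  have h2 : Path.Homotopic.Quotient.trans (⟦f0.symm⟧ : Path.Homotopic.Quotient x x) (⟦f0⟧ : Path.Homotopic.Quotient x x) = ⟦Path.refl x⟧ :=
    Quotient.sound ⟨(Path.Homotopy.reflSymmTrans f0).symm⟩
  let e : Homeomorph (Path.Homotopic.Quotient x x) (Path.Homotopic.Quotient x x) :=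
    { toFun := fun g => g.trans ⟦f0⟧
      invFun := fun g => g.trans ⟦f0.symm⟧
      left_inv := fun g => by simp only []; exact (assoc g _ _).trans ((congrArg (Path.Homotopic.Quotient.trans g) h1).trans (comp_refl g))
      right_inv := fun g => by simp only []; exact (assoc g _ _).trans ((congrArg (Path.Homotopic.Quotient.trans g) h2).trans (comp_refl g))
      continuous_toFun := continuous_comp_right x f0
      continuous_invFun := continuous_comp_right x f0.symm }
  exact e.isHomeomorph
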